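/- Weakening for the witness-bounding derivability relation: if (γ, k) ⊢^α_c Γ, and for all n, H_γ(max(k,n)) ≤ H_{γ₁}(max(k₁,n)), then for all Γ ⊆ Γ₁, all α₁ with α ≤_{H_{γ₁}(k₁)} α₁, and all c ≤ c₁, we have (γ₁, k₁) ⊢^{α₁}_{c₁} Γ₁. -/

import Mathlib

open ONote in
/-- `α` is a successor ordinal notation (its Cantor normal form ends with `ω^0·m`). -/
def ONote.isSucc : ONote → Prop
  | ONote.zero => False
  | ONote.oadd e _ ONote.zero => e = 0
  | ONote.oadd _ _ (ONote.oadd e n a) => ONote.isSucc (ONote.oadd e n a)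

instance : DecidablePred ONote.isSucc := by
  intro a
  induction a with
  | zero => exact .isFalse (by simp [ONote.isSucc])
  | oadd e n a ihe iha =>
    cases a with
    | zero => exact decidable_of_iff (e = 0) Iff.rfl
    | oadd e' n' a' => exact iha

/-- The standard fundamental sequence assignment `α[x]` on Cantor normal forms:
`0[x] = 0`, `(α+1)[x] = α`, and for `λ` with last term `ω^(β+1)` one has
`λ[x] = (λ - ω^(β+1)) + ω^β·x`, while for last term `ω^γ` (`γ` limit),
`λ[x] = (λ - ω^γ) + ω^(γ[x])`. -/
def ONote.fseq : ONote → ℕ → ONote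
  | ONote.zero, _ => ONote.zero
  | ONote.oadd e m (ONote.oadd e' m' a'), x =>
      ONote.oadd e m (ONote.fseq (ONote.oadd e' m' a') x)
  | ONote.oadd ONote.zero m ONote.zero, _ =>
      if _h : m = 1 then ONote.zero else ONote.oadd ONote.zero (m - 1) ONote.zero
  | ONote.oadd (ONote.oadd e1 m1 a1) m ONote.zero, x =>
      let e := ONote.oadd e1 m1 a1
      let tail : ONote → ONote :=
        fun t => if m = 1 then t else ONote.oadd e (m - 1) t
      if ONote.isSucc e then
        match x with
        | 0 => tail ONote.zero
        | Nat.succ y => tail (ONote.oadd (ONote.fseq e (y+1)) (Nat.succPNat y) ONote.zero)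
      else tail (ONote.oadd (ONote.fseq e x) 1 ONote.zero)

/-- `α <_n β` : transitive closure of `α = β[n]`. -/
def ONote.stepLt (n : ℕ) (a b : ONote) : Prop :=
  Relation.TransGen (fun x y => x = ONote.fseq y n) a b

/-- `α ≤_n β`. -/
def ONote.stepLe (n : ℕ) (a b : ONote) : Prop :=
  ONote.stepLt n a b ∨ a = b

/-- The graph of the Hardy hierarchy: `H_0(x) = x`, `H_{α+1}(x) = H_α(x+1)`,
`H_λ(x) = H_{λ[x]}(x)` for limit `λ`. -/
inductive HardyRel : ONote → ℕ → ℕ → Prop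
  | zero (x : ℕ) : HardyRel ONote.zero x x
  | succ {a : ONote} {x y : ℕ} (h : a.isSucc) (hrec : HardyRel (a.fseq x) (x + 1) y) :
      HardyRel a x y
  | limit {a : ONote} {x y : ℕ} (h0 : a ≠ ONote.zero) (h : ¬ a.isSucc)
      (hrec : HardyRel (a.fseq x) x y) : HardyRel a x y

open scoped Classical in
/-- The Hardy function `H_α : ℕ → ℕ` (for `α` in normal form the defining
recursion terminates, so `hardy` is the unique value of the graph `HardyRel`). -/
noncomputable def hardy (a : ONote) (x : ℕ) : ℕ :=
  if h : ∃ y, HardyRel a x y then h.choose else 0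

/-- Infinitary sentences of arithmetic: `Δ₀`-sentences are identified with their
truth value, and quantifiers range over numerals. -/
inductive Fml : Type 1 where
  | delta0 (P : Prop) : Fml
  | or (A B : Fml) : Fml
  | and (A B : Fml) : Fml
  | ex (A : ℕ → Fml) : Fml
  | all (A : ℕ → Fml) : Fml

/-- Negation (de Morgan dual). -/
def Fml.neg : Fml → Fml
  | .delta0 P => .delta0 (¬ P)
  | .or A B => .and A.neg B.neg
  | .and A B => .or A.neg B.neg
  | .ex A => .all fun n => (A n).neg
  | .all A => .ex fun n => (A n).neg

/-- `dg(A)`: `dg = 0` on `Δ₀`, `max` at `∨,∧`, `+1` at quantifiers. -/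
def Fml.dg : Fml → ℕ
  | .delta0 _ => 0
  | .or A B => max A.dg B.dg
  | .and A B => max A.dg B.dg
  | .ex A => (A 0).dg + 1
  | .all A => (A 0).dg + 1

/-- `A` is a `Σ₁`-sentence `∃x A₀(x)` with `A₀ ∈ Δ₀`. -/
def Fml.IsSigma1 (A : Fml) : Prop :=
  ∃ f : ℕ → Fml, A = Fml.ex f ∧ ∀ n, ∃ P : Prop, f n = Fml.delta0 P

/-- Truth of a `Δ₀`-sentence. -/
def Fml.TrueD0 (A : Fml) : Prop := ∃ P : Prop, A = Fml.delta0 P ∧ P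

/-- `k ⊨ ∃x A(x)` : there is a witness `n < k` making the `Δ₀`-matrix true. -/
def Fml.SatBelow (k : ℕ) (A : Fml) : Prop :=
  ∃ f : ℕ → Fml, A = Fml.ex f ∧ ∃ n < k, (f n).TrueD0

/-- The witness-bounding derivability relation `(γ, k) ⊢^α_c Γ`, with
`ℓ = H_γ(k)` controlling ordinal descent and existential witnesses. -/
inductive Der : ONote → ℕ → ONote → ℕ → Set Fml → Prop
  | ax {γ : ONote} {k : ℕ} {α : ONote} {c : ℕ} {Γ : Set Fml} (P : Prop) (hP : P)
      (hmem : Fml.delta0 P ∈ Γ) : Der γ k α c Γ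
  | cut {γ : ONote} {k : ℕ} {α α₀ : ONote} {c : ℕ} {Γ : Set Fml} (A : Fml)
      (hord : ONote.stepLe (hardy γ k) (α₀ + 1) α) (hdg : A.dg < c)
      (d₁ : Der γ k α₀ c (insert A Γ)) (d₂ : Der γ k α₀ c (insert A.neg Γ)) :
      Der γ k α c Γ
  | and {γ : ONote} {k : ℕ} {α α₀ : ONote} {c : ℕ} {Γ : Set Fml} (A₀ A₁ : Fml)
      (hord : ONote.stepLt (hardy γ k) α₀ α) (hmem : Fml.and A₀ A₁ ∈ Γ)
      (d₀ : Der γ k α₀ c (insert A₀ Γ)) (d₁ : Der γ k α₀ c (insert A₁ Γ)) :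
      Der γ k α c Γ
  | or {γ : ONote} {k : ℕ} {α α₀ : ONote} {c : ℕ} {Γ : Set Fml} (A₀ A₁ : Fml) (i : Bool)
      (hord : ONote.stepLe (hardy γ k) (α₀ + 1) α) (hmem : Fml.or A₀ A₁ ∈ Γ)
      (d : Der γ k α₀ c (insert (cond i A₀ A₁) Γ)) : Der γ k α c Γ
  | allOmega {γ : ONote} {k : ℕ} {α α₀ : ONote} {c : ℕ} {Γ : Set Fml} (A : ℕ → Fml)
      (hord : ONote.stepLt (hardy γ k) α₀ α) (hmem : Fml.all A ∈ Γ)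
      (d : ∀ n : ℕ, Der γ (max k n) α₀ c (insert (A n) Γ)) : Der γ k α c Γ
  | exIntro {γ : ONote} {k : ℕ} {α α₀ : ONote} {c : ℕ} {Γ : Set Fml} (A : ℕ → Fml) (n : ℕ)
      (hord : ONote.stepLe (hardy γ k) (α₀ + 1) α) (hmem : Fml.ex A ∈ Γ)
      (hn : n < hardy γ k) (d : Der γ k α₀ c (insert (A n) Γ)) : Der γ k α c Γ
section Aux

open ONote Ordinal Relation

/-! ### Equation lemmas for `fseq` -/

lemma fseq_tail (e : ONote) (m : ℕ+) (e' : ONote) (m' : ℕ+) (a' : ONote) (x : ℕ) :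
    ONote.fseq (.oadd e m (.oadd e' m' a')) x = .oadd e m (ONote.fseq (.oadd e' m' a') x) :=
  ONote.fseq.eq_2 x e m e' m' a'

lemma fseq_nat (m : ℕ+) (x : ℕ) :
    ONote.fseq (.oadd .zero m .zero) x
      = if m = 1 then ONote.zero else .oadd .zero (m-1) .zero := by
  rw [ONote.fseq.eq_3]; split <;> rfl

lemma fseq_succ_zero (e1 : ONote) (m1 : ℕ+) (a1 : ONote) (m : ℕ+)
    (h : ONote.isSucc (.oadd e1 m1 a1)) :
    ONote.fseq (.oadd (.oadd e1 m1 a1) m .zero) 0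
      = (if m = 1 then ONote.zero else .oadd (.oadd e1 m1 a1) (m-1) .zero) := by
  rw [ONote.fseq.eq_4, if_pos h]

lemma fseq_succ_succ (e1 : ONote) (m1 : ℕ+) (a1 : ONote) (m : ℕ+)
    (h : ONote.isSucc (.oadd e1 m1 a1)) (y : ℕ) :
    ONote.fseq (.oadd (.oadd e1 m1 a1) m .zero) (y+1)
      = (if m = 1 then ONote.oadd (ONote.fseq (.oadd e1 m1 a1) (y+1)) (Nat.succPNat y) .zero
         else .oadd (.oadd e1 m1 a1) (m-1)
            (ONote.oadd (ONote.fseq (.oadd e1 m1 a1) (y+1)) (Nat.succPNat y) .zero)) := by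
  rw [ONote.fseq.eq_5, if_pos h]

lemma fseq_limit (e1 : ONote) (m1 : ℕ+) (a1 : ONote) (m : ℕ+)
    (h : ¬ ONote.isSucc (.oadd e1 m1 a1)) (x : ℕ) :
    ONote.fseq (.oadd (.oadd e1 m1 a1) m .zero) x
      = (if m = 1 then ONote.oadd (ONote.fseq (.oadd e1 m1 a1) x) 1 .zero
         else .oadd (.oadd e1 m1 a1) (m-1)
            (ONote.oadd (ONote.fseq (.oadd e1 m1 a1) x) 1 .zero)) := by
  cases x with
  | zero => rw [ONote.fseq.eq_4, if_neg h]
  | succ y => rw [ONote.fseq.eq_5, if_neg h]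

end Aux
section Aux2
open ONote Ordinal Relation

lemma pnat_add_one_ne_one (i : ℕ+) : i + 1 ≠ 1 := by
  intro h
  have h2 : (i:ℕ) + 1 = 1 := by exact_mod_cast congrArg PNat.val h
  have hp := i.pos
  omega

lemma pnat_add_one_sub_one (i : ℕ+) : i + 1 - 1 = i := by
  apply PNat.coe_injective
  rw [PNat.sub_coe, if_pos (PNat.lt_add_left 1 i)]
  simp

/-! ### Basic properties of `stepLt`/`stepLe` -/

lemma stepLe_refl (n : ℕ) (a : ONote) : ONote.stepLe n a a := Or.inr rfl

lemma stepLt_trans {n : ℕ} {a b c : ONote} (h1 : ONote.stepLt n a b) (h2 : ONote.stepLt n b c) :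
    ONote.stepLt n a c := Relation.TransGen.trans h1 h2

lemma stepLe_trans {n : ℕ} {a b c : ONote} (h1 : ONote.stepLe n a b) (h2 : ONote.stepLe n b c) :
    ONote.stepLe n a c := by
  rcases h1 with h1 | rfl
  · rcases h2 with h2 | rfl
    · exact Or.inl (stepLt_trans h1 h2)
    · exact Or.inl h1
  · exact h2

lemma stepLe_trans_lt {n : ℕ} {a b c : ONote} (h1 : ONote.stepLe n a b) (h2 : ONote.stepLt n b c) :
    ONote.stepLt n a c := by
  rcases h1 with h1 | rfl
  · exact stepLt_trans h1 h2
  · exact h2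

lemma stepLt_trans_le {n : ℕ} {a b c : ONote} (h1 : ONote.stepLt n a b) (h2 : ONote.stepLe n b c) :
    ONote.stepLt n a c := by
  rcases h2 with h2 | rfl
  · exact stepLt_trans h1 h2
  · exact h1

lemma stepLt_of_stepLe_fseq {n : ℕ} {a b : ONote} (h : ONote.stepLe n a (ONote.fseq b n)) :
    ONote.stepLt n a b := by
  rcases h with h | h
  · exact h.tail rfl
  · exact Relation.TransGen.single h

/-- Congruence in the tail. -/
lemma stepLe_oadd_tail {n : ℕ} (e : ONote) (k : ℕ+) {t t' : ONote}
    (h : ONote.stepLe n t t') : ONote.stepLe n (.oadd e k t) (.oadd e k t') := by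
  rcases h with h | rfl
  · induction h with
    | single h =>
      rename_i t''
      cases t'' with
      | zero => rw [show ONote.fseq ONote.zero n = ONote.zero from rfl] at h; subst h; exact Or.inr rfl
      | oadd e2 n2 a2 =>
        exact Or.inl (Relation.TransGen.single (by rw [fseq_tail, ← h]))
    | tail h1 h2 ih =>
      rename_i b c
      have step2 : ONote.stepLe n (ONote.oadd e k b) (ONote.oadd e k c) := by
        cases c with
        | zero => rw [show ONote.fseq ONote.zero n = ONote.zero from rfl] at h2; subst h2; exact Or.inr rfl
        | oadd e2 n2 a2 =>
          exact Or.inl (Relation.TransGen.single (by rw [fseq_tail, ← h2]))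
      exact stepLe_trans ih step2
  · exact Or.inr rfl

end Aux2
section Aux3
open ONote Ordinal Relation

lemma omega_pow_mul_nat_lt {a b : Ordinal} (h : a < b) (c : ℕ+) :
    ω ^ a * (c : ℕ) < ω ^ b := by
  calc ω ^ a * (c : ℕ) < ω ^ a * ω :=
        mul_lt_mul_of_pos_left (Ordinal.nat_lt_omega0 c) (Ordinal.opow_pos a Ordinal.omega0_pos)
    _ = ω ^ (a + 1) := by rw [Ordinal.add_one_eq_succ, Ordinal.opow_succ]
    _ ≤ ω ^ b := Ordinal.opow_le_opow_right Ordinal.omega0_pos (Order.succ_le_of_lt h)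

lemma repr_oadd (e : ONote) (n : ℕ+) (a : ONote) :
    ONote.repr (.oadd e n a) = ω ^ e.repr * (n : ℕ) + a.repr := rfl

lemma tail_repr_lt (e : ONote) (n : ℕ+) (t : ONote) (h : t.repr < ω ^ e.repr) :
    (if n = 1 then t else ONote.oadd e (n-1) t).repr < (ONote.oadd e n ONote.zero).repr := by
  rw [repr_oadd]
  have hz : ONote.repr ONote.zero = 0 := rfl
  rw [hz, add_zero]
  split
  · next hn =>
    subst hn
    simpa using lt_of_lt_of_le h (by simp)
  · next hn =>
    rw [repr_oadd]
    have h1 : (1:ℕ+) < n := lt_of_le_of_ne n.one_le (Ne.symm hn)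
    have hc : ((n - 1 : ℕ+) : ℕ) = (n : ℕ) - 1 := by rw [PNat.sub_coe, if_pos h1]; simp
    have hn2 : ((n : ℕ) - 1 : ℕ) + 1 = (n : ℕ) := Nat.succ_pred_eq_of_pos n.pos
    calc ω ^ e.repr * ((n-1 : ℕ+) : ℕ) + t.repr
        < ω ^ e.repr * ((n-1 : ℕ+) : ℕ) + ω ^ e.repr := add_lt_add_right h _
      _ = ω ^ e.repr * ((((n:ℕ) - 1 : ℕ) : Ordinal) + 1) := by rw [hc, mul_add, mul_one]
      _ = ω ^ e.repr * (n : ℕ) := by norm_cast; rw [hn2]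

lemma repr_fseq_lt (m : ℕ) : ∀ β : ONote, β ≠ ONote.zero → (ONote.fseq β m).repr < β.repr := by
  intro β
  induction β with
  | zero => exact fun h => absurd rfl h
  | oadd e n a ihe iha =>
    intro _
    cases a with
    | oadd e' n' a' =>
      rw [fseq_tail, repr_oadd, repr_oadd]
      exact add_lt_add_right (iha (by simp)) _
    | zero =>
      cases e with
      | zero =>
        rw [fseq_nat]
        exact tail_repr_lt _ _ _ (by rw [show ONote.repr ONote.zero = 0 from rfl]; simpa using Ordinal.opow_pos (0:Ordinal) Ordinal.omega0_pos)
      | oadd e1 m1 a1 =>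
        have he := ihe (by simp)
        by_cases hs : ONote.isSucc (.oadd e1 m1 a1)
        · cases m with
          | zero =>
            rw [fseq_succ_zero _ _ _ _ hs]
            exact tail_repr_lt _ _ _ (by rw [show ONote.repr ONote.zero = 0 from rfl]; exact Ordinal.opow_pos _ Ordinal.omega0_pos)
          | succ y =>
            rw [fseq_succ_succ _ _ _ _ hs]
            refine tail_repr_lt _ _ _ ?_
            rw [repr_oadd, show ONote.repr ONote.zero = 0 from rfl, add_zero]
            exact omega_pow_mul_nat_lt he _
        · rw [fseq_limit _ _ _ _ hs]
          refine tail_repr_lt _ _ _ ?_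
          rw [repr_oadd, show ONote.repr ONote.zero = 0 from rfl, add_zero]
          exact omega_pow_mul_nat_lt he _

lemma zero_stepLe (m : ℕ) (β : ONote) : ONote.stepLe m ONote.zero β := by
  suffices h : ∀ o : Ordinal, ∀ β : ONote, β.repr = o → ONote.stepLe m ONote.zero β from
    h β.repr β rfl
  intro o
  induction o using Ordinal.induction with
  | h o ih =>
    intro β hβ
    cases β with
    | zero => exact Or.inr rfl
    | oadd e n a =>
      have hlt := repr_fseq_lt m (.oadd e n a) (by simp)
      have h1 : ONote.stepLe m ONote.zero (ONote.fseq (.oadd e n a) m) := by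
        subst hβ
        exact ih _ hlt _ rfl
      exact Or.inl (stepLt_of_stepLe_fseq h1)

end Aux3
section Aux4
open ONote Ordinal Relation

/-- One coefficient step: `ω^p·i ⋖ ω^p·(i+1)` under any parameter. -/
lemma stepLt_coeff_succ (m : ℕ) (p : ONote) (i : ℕ+) :
    ONote.stepLt m (.oadd p i .zero) (.oadd p (i+1) .zero) := by
  cases p with
  | zero =>
    refine Relation.TransGen.single ?_
    rw [fseq_nat, if_neg (pnat_add_one_ne_one i), pnat_add_one_sub_one]
  | oadd e1 m1 a1 =>
    by_cases hs : ONote.isSucc (.oadd e1 m1 a1)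
    · cases m with
      | zero =>
        refine Relation.TransGen.single ?_
        rw [fseq_succ_zero _ _ _ _ hs, if_neg (pnat_add_one_ne_one i), pnat_add_one_sub_one]
      | succ y =>
        have heq := fseq_succ_succ e1 m1 a1 (i+1) hs y
        rw [if_neg (pnat_add_one_ne_one i), pnat_add_one_sub_one] at heq
        have hstep : ONote.stepLt (y+1)
            (ONote.fseq (.oadd (.oadd e1 m1 a1) (i+1) .zero) (y+1))
            (.oadd (.oadd e1 m1 a1) (i+1) .zero) := Relation.TransGen.single rfl
        rw [heq] at hstep
        refine stepLe_trans_lt ?_ hstep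
        exact stepLe_oadd_tail _ _ (zero_stepLe _ _)
    · have heq := fseq_limit e1 m1 a1 (i+1) hs m
      rw [if_neg (pnat_add_one_ne_one i), pnat_add_one_sub_one] at heq
      have hstep : ONote.stepLt m
          (ONote.fseq (.oadd (.oadd e1 m1 a1) (i+1) .zero) m)
          (.oadd (.oadd e1 m1 a1) (i+1) .zero) := Relation.TransGen.single rfl
      rw [heq] at hstep
      refine stepLe_trans_lt ?_ hstep
      exact stepLe_oadd_tail _ _ (zero_stepLe _ _)

lemma stepLe_coeff_aux (m : ℕ) (p : ONote) (i : ℕ+) (d : ℕ) :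
    ONote.stepLe m (.oadd p i .zero) (.oadd p ⟨(i:ℕ)+d, by have := i.pos; omega⟩ .zero) := by
  induction d with
  | zero =>
    have h : (⟨(i:ℕ)+0, by have := i.pos; omega⟩ : ℕ+) = i := PNat.coe_injective (by simp)
    rw [h]
    exact Or.inr rfl
  | succ d ih =>
    have h : (⟨(i:ℕ)+(d+1), by have := i.pos; omega⟩ : ℕ+)
        = (⟨(i:ℕ)+d, by have := i.pos; omega⟩ : ℕ+) + 1 := by
      apply PNat.coe_injective
      show (i:ℕ)+(d+1) = ((i:ℕ)+d)+1
      omega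
    rw [h]
    exact stepLe_trans ih (Or.inl (stepLt_coeff_succ m p _))

lemma stepLe_coeff (m : ℕ) (p : ONote) (i j : ℕ+) (hij : i ≤ j) :
    ONote.stepLe m (.oadd p i .zero) (.oadd p j .zero) := by
  obtain ⟨d, hd⟩ : ∃ d : ℕ, (j : ℕ) = (i : ℕ) + d :=
    ⟨(j:ℕ) - (i:ℕ), by have := (PNat.coe_le_coe i j).2 hij; omega⟩
  have h : j = (⟨(i:ℕ)+d, by have := i.pos; omega⟩ : ℕ+) := PNat.coe_injective (by simp [hd])
  rw [h]
  exact stepLe_coeff_aux m p i d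

end Aux4
section Aux5
open ONote Ordinal Relation

lemma fseq_isSucc_const : ∀ (e : ONote), e.isSucc → ∀ (x y : ℕ), e.fseq x = e.fseq y := by
  intro e
  induction e with
  | zero => intro h; exact absurd h (by simp [ONote.isSucc])
  | oadd e n a ihe iha =>
    intro h x y
    cases a with
    | zero =>
      have he : e = ONote.zero := h
      subst he
      rw [fseq_nat, fseq_nat]
    | oadd e' n' a' =>
      have h' : (ONote.oadd e' n' a').isSucc := h
      rw [fseq_tail, fseq_tail, iha h' x y]

/-- Single `fseq`-step congruence for `ω^(-)` (needs positive parameter). -/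
lemma stepLe_omega_pow_single {m : ℕ} (hm : 1 ≤ m) {a b : ONote} (h : a = ONote.fseq b m) :
    ONote.stepLe m (.oadd a 1 .zero) (.oadd b 1 .zero) := by
  cases b with
  | zero => subst h; exact Or.inr rfl
  | oadd e1 m1 a1 =>
    by_cases hs : ONote.isSucc (.oadd e1 m1 a1)
    · obtain ⟨y, rfl⟩ : ∃ y, m = y + 1 := ⟨m - 1, by omega⟩
      have heq := fseq_succ_succ e1 m1 a1 1 hs y
      rw [if_pos rfl] at heq
      have hstep : ONote.stepLt (y+1)
          (ONote.fseq (.oadd (.oadd e1 m1 a1) 1 .zero) (y+1))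
          (.oadd (.oadd e1 m1 a1) 1 .zero) := Relation.TransGen.single rfl
      rw [heq] at hstep
      subst h
      refine stepLe_trans_lt ?_ hstep |> Or.inl
      exact stepLe_coeff _ _ 1 (Nat.succPNat y) (by
        have : (1:ℕ) ≤ y + 1 := by omega
        exact PNat.one_le _)
    · have heq := fseq_limit e1 m1 a1 1 hs m
      rw [if_pos rfl] at heq
      subst h
      exact Or.inl (Relation.TransGen.single heq.symm)

lemma stepLe_omega_pow {m : ℕ} (hm : 1 ≤ m) {a b : ONote} (h : ONote.stepLe m a b) :
    ONote.stepLe m (.oadd a 1 .zero) (.oadd b 1 .zero) := by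
  rcases h with h | rfl
  · induction h with
    | single h1 => exact stepLe_omega_pow_single hm h1
    | tail h1 h2 ih => exact stepLe_trans ih (stepLe_omega_pow_single hm h2)
  · exact Or.inr rfl

/-- Monotonicity of `fseq` in the parameter, in the sense of `stepLe`. -/
lemma fseq_mono : ∀ (b : ONote) {n m : ℕ}, n ≤ m → ONote.stepLe m (b.fseq n) (b.fseq m) := by
  intro b
  induction b with
  | zero => intro n m _; exact Or.inr rfl
  | oadd e k a ihe iha =>
    intro n m hnm
    cases a with
    | oadd e' k' a' =>
      rw [fseq_tail, fseq_tail]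
      exact stepLe_oadd_tail _ _ (iha hnm)
    | zero =>
      rcases eq_or_lt_of_le hnm with rfl | hlt
      · exact Or.inr rfl
      cases e with
      | zero => rw [fseq_nat, fseq_nat]; exact Or.inr rfl
      | oadd e1 m1 a1 =>
        obtain ⟨y, rfl⟩ : ∃ y, m = y + 1 := ⟨m - 1, by omega⟩
        have hm1 : (1:ℕ) ≤ y + 1 := by omega
        by_cases hs : ONote.isSucc (.oadd e1 m1 a1)
        · -- successor exponent
          rw [fseq_succ_succ e1 m1 a1 k hs y]
          cases n with
          | zero =>
            rw [fseq_succ_zero e1 m1 a1 k hs]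
            split
            · exact zero_stepLe _ _
            · exact stepLe_oadd_tail _ _ (zero_stepLe _ _)
          | succ z =>
            rw [fseq_succ_succ e1 m1 a1 k hs z,
                fseq_isSucc_const (.oadd e1 m1 a1) hs (z+1) (y+1)]
            have hcoeff : ONote.stepLe (y+1)
                (ONote.oadd (ONote.fseq (.oadd e1 m1 a1) (y+1)) (Nat.succPNat z) .zero)
                (ONote.oadd (ONote.fseq (.oadd e1 m1 a1) (y+1)) (Nat.succPNat y) .zero) :=
              stepLe_coeff _ _ _ _ (by
                have : z + 1 ≤ y + 1 := by omega
                exact this)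
            split
            · exact hcoeff
            · exact stepLe_oadd_tail _ _ hcoeff
        · -- limit exponent
          rw [fseq_limit e1 m1 a1 k hs n, fseq_limit e1 m1 a1 k hs (y+1)]
          have inner : ONote.stepLe (y+1)
              (ONote.oadd (ONote.fseq (.oadd e1 m1 a1) n) 1 .zero)
              (ONote.oadd (ONote.fseq (.oadd e1 m1 a1) (y+1)) 1 .zero) :=
            stepLe_omega_pow hm1 (ihe hnm)
          split
          · exact inner
          · exact stepLe_oadd_tail _ _ inner

/-- Monotonicity of `stepLt` in the parameter. -/
lemma stepLt_mono_param {n m : ℕ} (hnm : n ≤ m) {a b : ONote} (h : ONote.stepLt n a b) :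
    ONote.stepLt m a b := by
  induction h with
  | single h1 =>
    subst h1
    exact stepLt_of_stepLe_fseq (fseq_mono _ hnm)
  | tail h1 h2 ih =>
    subst h2
    exact stepLt_trans ih (stepLt_of_stepLe_fseq (fseq_mono _ hnm))

lemma stepLe_mono_param {n m : ℕ} (hnm : n ≤ m) {a b : ONote} (h : ONote.stepLe n a b) :
    ONote.stepLe m a b := by
  rcases h with h | rfl
  · exact Or.inl (stepLt_mono_param hnm h)
  · exact Or.inr rfl

end Aux5
section Main
open ONote Ordinal Relation

theorem Der.weakening_aux {γ : ONote} {k : ℕ} {α : ONote} {c : ℕ} {Γ : Set Fml}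
    (d : Der γ k α c Γ) :
    ∀ (γ₁ : ONote) (k₁ c₁ : ℕ) (Γ₁ : Set Fml) (α₁ : ONote),
      (∀ n : ℕ, hardy γ (max k n) ≤ hardy γ₁ (max k₁ n)) → Γ ⊆ Γ₁ →
      ONote.stepLe (hardy γ₁ k₁) α α₁ → c ≤ c₁ → Der γ₁ k₁ α₁ c₁ Γ₁ := by
  induction d with
  | ax P hP hmem =>
    intro γ₁ k₁ c₁ Γ₁ α₁ hH hΓ hord hc
    exact Der.ax P hP (hΓ hmem)
  | cut A hord0 hdg d1 d2 ih1 ih2 =>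
    intro γ₁ k₁ c₁ Γ₁ α₁ hH hΓ hord hc
    have hl := hH 0
    simp only [Nat.max_zero] at hl
    refine Der.cut A ?_ (lt_of_lt_of_le hdg hc)
      (ih1 γ₁ k₁ c₁ _ _ hH (Set.insert_subset_insert hΓ) (Or.inr rfl) hc)
      (ih2 γ₁ k₁ c₁ _ _ hH (Set.insert_subset_insert hΓ) (Or.inr rfl) hc)
    exact stepLe_trans (stepLe_mono_param hl hord0) hord
  | and A₀ A₁ hord0 hmem d0 d1 ih0 ih1 =>
    intro γ₁ k₁ c₁ Γ₁ α₁ hH hΓ hord hc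
    have hl := hH 0
    simp only [Nat.max_zero] at hl
    refine Der.and A₀ A₁ ?_ (hΓ hmem)
      (ih0 γ₁ k₁ c₁ _ _ hH (Set.insert_subset_insert hΓ) (Or.inr rfl) hc)
      (ih1 γ₁ k₁ c₁ _ _ hH (Set.insert_subset_insert hΓ) (Or.inr rfl) hc)
    exact stepLt_trans_le (stepLt_mono_param hl hord0) hord
  | or A₀ A₁ i hord0 hmem d0 ih0 =>
    intro γ₁ k₁ c₁ Γ₁ α₁ hH hΓ hord hc
    have hl := hH 0
    simp only [Nat.max_zero] at hl
    refine Der.or A₀ A₁ i ?_ (hΓ hmem)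
      (ih0 γ₁ k₁ c₁ _ _ hH (Set.insert_subset_insert hΓ) (Or.inr rfl) hc)
    exact stepLe_trans (stepLe_mono_param hl hord0) hord
  | allOmega A hord0 hmem d0 ih0 =>
    intro γ₁ k₁ c₁ Γ₁ α₁ hH hΓ hord hc
    have hl := hH 0
    simp only [Nat.max_zero] at hl
    refine Der.allOmega A (stepLt_trans_le (stepLt_mono_param hl hord0) hord)
      (hΓ hmem) (fun n => ?_)
    refine ih0 n γ₁ (max k₁ n) c₁ _ _ (fun j => ?_)
      (Set.insert_subset_insert hΓ) (Or.inr rfl) hc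
    have := hH (max n j)
    rwa [← max_assoc, ← max_assoc] at this
  | exIntro A n hord0 hmem hn d0 ih0 =>
    intro γ₁ k₁ c₁ Γ₁ α₁ hH hΓ hord hc
    have hl := hH 0
    simp only [Nat.max_zero] at hl
    refine Der.exIntro A n ?_ (hΓ hmem) (lt_of_lt_of_le hn hl)
      (ih0 γ₁ k₁ c₁ _ _ hH (Set.insert_subset_insert hΓ) (Or.inr rfl) hc)
    exact stepLe_trans (stepLe_mono_param hl hord0) hord

end Main

/-- Weakening: if `(γ,k) ⊢^α_c Γ` and
`H_γ(max(k,n)) ≤ H_{γ₁}(max(k₁,n))` for all `n`, then for `Γ ⊆ Γ₁`,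
`α ≤_{H_{γ₁}(k₁)} α₁` and `c ≤ c₁` we get `(γ₁,k₁) ⊢^{α₁}_{c₁} Γ₁`. -/
theorem Der.weakening (γ γ₁ α α₁ : ONote) (k k₁ c c₁ : ℕ) (Γ Γ₁ : Set Fml)
    (hγ : γ.NF) (hγ₁ : γ₁.NF) (hα : α.NF) (hα₁ : α₁.NF)
    (d : Der γ k α c Γ)
    (hH : ∀ n : ℕ, hardy γ (max k n) ≤ hardy γ₁ (max k₁ n))
    (hΓ : Γ ⊆ Γ₁) (hord : ONote.stepLe (hardy γ₁ k₁) α α₁) (hc : c ≤ c₁) :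
    Der γ₁ k₁ α₁ c₁ Γ₁ :=
  d.weakening_aux γ₁ k₁ c₁ Γ₁ α₁ hH hΓ hord hc
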